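/- The supremum over z ≥ 0 of the standardized absolute third central moment of the standard normal truncated below at z, C₁ = sup_{z ≥ 0} E[|Z − E(Z|Z>z)|³ | Z > z] / Var(Z|Z>z)^{3/2}, is finite. -/

import Mathlib

open Real MeasureTheory

/-- standard normal density -/
noncomputable def stdPhi (t : ℝ) : ℝ := (Real.sqrt (2 * Real.pi))⁻¹ * Real.exp (-t ^ 2 / 2)

/-- standard normal cumulative distribution function -/
noncomputable def stdCDF (x : ℝ) : ℝ := ∫ t in Set.Iic x, stdPhi t

/-- mean of the standard normal truncated below at `z` -/
noncomputable def truncMean (z : ℝ) : ℝ :=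
  ∫ t in Set.Ioi z, t * (stdPhi t / (1 - stdCDF z))

/-- variance of the standard normal truncated below at `z` -/
noncomputable def truncVar (z : ℝ) : ℝ :=
  ∫ t in Set.Ioi z, (t - truncMean z) ^ 2 * (stdPhi t / (1 - stdCDF z))

open Set Filter

lemma stdPhi_pos (t : ℝ) : 0 < stdPhi t := by
  unfold stdPhi
  positivity

lemma stdPhi_continuous : Continuous stdPhi := by
  unfold stdPhi
  fun_prop

lemma stdPhi_eq (t : ℝ) : stdPhi t = (Real.sqrt (2 * Real.pi))⁻¹ * Real.exp (-(1/2 * t ^ 2)) := by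
  unfold stdPhi; ring_nf

lemma integrable_stdPhi : Integrable stdPhi := by
  have h := (integrable_exp_neg_mul_sq (by norm_num : (0:ℝ) < 1/2)).const_mul
    ((Real.sqrt (2 * Real.pi))⁻¹)
  refine h.congr ?_
  filter_upwards with t
  rw [stdPhi_eq]
  ring_nf

lemma integral_stdPhi : ∫ t, stdPhi t = 1 := by
  have : ∫ t, stdPhi t = (Real.sqrt (2 * Real.pi))⁻¹ * ∫ t : ℝ, Real.exp (-(1/2) * t ^ 2) := by
    rw [← integral_const_mul]
    congr 1 with t
    rw [stdPhi_eq]; ring_nf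
  rw [this, integral_gaussian]
  have h2 : π / (1/2 : ℝ) = 2 * π := by ring
  rw [h2, inv_mul_cancel₀]
  positivity

lemma G_eq (z : ℝ) : 1 - stdCDF z = ∫ t in Set.Ioi z, stdPhi t := by
  have h := intervalIntegral.integral_Iic_add_Ioi (b := z) integrable_stdPhi.integrableOn
    integrable_stdPhi.integrableOn
  rw [integral_stdPhi] at h
  unfold stdCDF
  linarith

lemma integrable_abs_pow_stdPhi (k : ℕ) : Integrable (fun t => |t| ^ k * stdPhi t) := by
  have h := integrable_rpow_mul_exp_neg_mul_sq (by norm_num : (0:ℝ) < 1/2)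
    (lt_of_lt_of_le (by norm_num : (-1:ℝ) < 0) (Nat.cast_nonneg k))
  have h2 := (h.abs).const_mul ((Real.sqrt (2 * Real.pi))⁻¹)
  refine h2.mono' ?_ ?_
  · exact ((continuous_abs.pow k).mul stdPhi_continuous).aestronglyMeasurable
  · filter_upwards with t
    have h0 : 0 < stdPhi t := stdPhi_pos t
    rw [Real.norm_eq_abs, abs_of_nonneg (by positivity)]
    rw [Real.rpow_natCast, abs_mul, abs_pow, abs_of_nonneg (Real.exp_nonneg _)]
    unfold stdPhi
    rw [show -(1/2 : ℝ) * t ^ 2 = -t ^ 2 / 2 by ring]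
    have : (0:ℝ) < (Real.sqrt (2 * Real.pi))⁻¹ := by positivity
    nlinarith [Real.exp_pos (-t^2/2), pow_nonneg (abs_nonneg t) k]

lemma integrable_abs_pow_sub_stdPhi (k : ℕ) (c : ℝ) :
    Integrable (fun t => |t - c| ^ k * stdPhi t) := by
  have hg : Integrable (fun t => 2 ^ k * (|t| ^ k * stdPhi t) + (2 ^ k * |c| ^ k) * stdPhi t) :=
    ((integrable_abs_pow_stdPhi k).const_mul _).add (integrable_stdPhi.const_mul _)
  refine hg.mono' ?_ ?_
  · exact ((continuous_abs.comp (continuous_id.sub continuous_const)).pow k |>.mul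
      stdPhi_continuous).aestronglyMeasurable
  · filter_upwards with t
    have h0 : 0 ≤ stdPhi t := (stdPhi_pos t).le
    rw [Real.norm_eq_abs, abs_of_nonneg (by positivity)]
    have h1 : |t - c| ^ k ≤ 2 ^ k * (|t| ^ k + |c| ^ k) := by
      calc |t - c| ^ k ≤ (|t| + |c|) ^ k := by
            exact pow_le_pow_left₀ (abs_nonneg _) (abs_sub _ _) k
        _ ≤ (2 * max |t| |c|) ^ k := by
            refine pow_le_pow_left₀ (by positivity) ?_ k
            rcases le_total |t| |c| with h | h
            · simp [max_eq_right h]; linarith [abs_nonneg t]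
            · simp [max_eq_left h]; linarith [abs_nonneg c]
        _ = 2 ^ k * max |t| |c| ^ k := mul_pow _ _ _
        _ ≤ 2 ^ k * (|t| ^ k + |c| ^ k) := by
            refine mul_le_mul_of_nonneg_left ?_ (by positivity)
            rcases le_total |t| |c| with h | h
            · rw [max_eq_right h]; nlinarith [pow_nonneg (abs_nonneg t) k]
            · rw [max_eq_left h]; nlinarith [pow_nonneg (abs_nonneg c) k]
    nlinarith [pow_nonneg (abs_nonneg t) k, pow_nonneg (abs_nonneg c) k]

lemma tendsto_exp_shift {b z : ℝ} (hb : 0 < b) :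
    Tendsto (fun t => Real.exp (-(b * (t - z)))) atTop (nhds 0) := by
  have h1 : Tendsto (fun t : ℝ => b * (t - z)) atTop atTop :=
    (tendsto_atTop_add_const_right atTop (-z) tendsto_id).const_mul_atTop hb
  have := Real.tendsto_exp_neg_atTop_nhds_zero.comp h1
  simpa [Function.comp_def] using this

lemma hasDerivAt_exp_shift {b : ℝ} (z x : ℝ) (hb : b ≠ 0) :
    HasDerivAt (fun t => -(1/b) * Real.exp (-(b * (t - z))))
      (Real.exp (-(b * (x - z)))) x := by
  have h : HasDerivAt (fun t : ℝ => -(b * (t - z))) (-b) x := by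
    simpa using ((hasDerivAt_id x).sub_const z).const_mul (-b)
  have h2 := h.exp.const_mul (-(1/b))
  convert h2 using 1
  all_goals first | rfl | field_simp

lemma integrableOn_exp_shift {b z : ℝ} (hb : 0 < b) :
    IntegrableOn (fun t => Real.exp (-(b * (t - z)))) (Set.Ioi z) := by
  refine integrableOn_Ioi_deriv_of_nonneg' (l := 0)
    (fun x _ => hasDerivAt_exp_shift z x hb.ne') (fun x _ => (Real.exp_pos _).le) ?_
  simpa using (tendsto_exp_shift (z := z) hb).const_mul (-(1/b))

lemma integral_exp_shift {b z : ℝ} (hb : 0 < b) :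
    ∫ t in Set.Ioi z, Real.exp (-(b * (t - z))) = 1 / b := by
  rw [integral_Ioi_of_hasDerivAt_of_nonneg' (l := 0)
    (fun x _ => hasDerivAt_exp_shift z x hb.ne') (fun x _ => (Real.exp_pos _).le)
    (by simpa using (tendsto_exp_shift (z := z) hb).const_mul (-(1/b)))]
  simp [hb.ne']

lemma stdPhi_anti {z t : ℝ} (hz : 0 ≤ z) (ht : z ≤ t) : stdPhi t ≤ stdPhi z := by
  unfold stdPhi
  have hc : (0:ℝ) < (Real.sqrt (2 * Real.pi))⁻¹ := by positivity
  have := Real.exp_le_exp.mpr (show -t ^ 2 / 2 ≤ -z ^ 2 / 2 by nlinarith)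
  nlinarith [Real.exp_pos (-t^2/2)]

lemma pointwise_bound {z t : ℝ} (hz : 0 ≤ z) (ht : z ≤ t) :
    stdPhi t ≤ stdPhi z * (Real.exp (1/2) * Real.exp (-((1 + z) * (t - z)))) := by
  have key : stdPhi z * (Real.exp (1/2) * Real.exp (-((1 + z) * (t - z)))) =
      (Real.sqrt (2 * Real.pi))⁻¹ * Real.exp (-z ^ 2 / 2 + (1/2 + -((1 + z) * (t - z)))) := by
    unfold stdPhi
    rw [Real.exp_add, Real.exp_add]
    ring
  rw [key]
  unfold stdPhi
  have hc : (0:ℝ) < (Real.sqrt (2 * Real.pi))⁻¹ := by positivity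
  refine mul_le_mul_of_nonneg_left (Real.exp_le_exp.mpr ?_) hc.le
  nlinarith [sq_nonneg (t - z - 1)]

lemma moment_bound (k : ℕ) {z : ℝ} (hz : 0 ≤ z) (hk : 1 ≤ k) :
    ∫ t in Set.Ioi z, |t - z| ^ k * stdPhi t ≤
      stdPhi z * Real.exp (1/2) * k ^ k * (2 / (1 + z)) ^ (k + 1) := by
  set l : ℝ := 1 + z with hl
  have hl0 : (0:ℝ) < l := by simp only [hl]; linarith
  have hkR : (0:ℝ) < (k:ℝ) := by exact_mod_cast hk
  have step : ∫ t in Set.Ioi z, |t - z| ^ k * stdPhi t ≤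
      ∫ t in Set.Ioi z, (stdPhi z * Real.exp (1/2) * k ^ k * (2 / l) ^ k) *
        Real.exp (-(l / 2 * (t - z))) := by
    refine setIntegral_mono_on (integrable_abs_pow_sub_stdPhi k z).integrableOn
      ((integrableOn_exp_shift (by linarith)).const_mul _) measurableSet_Ioi ?_
    intro t htz
    have htz' : z < t := htz
    have hs : 0 < t - z := by linarith
    have h1 : stdPhi t ≤ stdPhi z * (Real.exp (1/2) * Real.exp (-(l * (t - z)))) :=
      pointwise_bound hz htz'.le
    set x : ℝ := l * (t - z) / (2 * (k:ℝ)) with hxdef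
    have hx0 : 0 ≤ x := div_nonneg (mul_nonneg hl0.le hs.le) (by positivity)
    have hxe : x ≤ Real.exp x := le_trans (by linarith) (Real.add_one_le_exp x)
    have htzx : t - z = 2 * (k:ℝ) / l * x := by
      rw [hxdef]; field_simp
    have h2 : (t - z) ^ k ≤ (k : ℝ) ^ k * (2 / l) ^ k * Real.exp (l / 2 * (t - z)) := by
      have e1 : ((2:ℝ) * k / l) ^ k = (k:ℝ) ^ k * (2 / l) ^ k := by
        rw [← mul_pow]; congr 1; field_simp
      have e2 : (Real.exp x) ^ k = Real.exp (l / 2 * (t - z)) := by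
        rw [← Real.exp_nat_mul]
        congr 1
        rw [hxdef]; field_simp
      calc (t - z) ^ k = (2 * (k:ℝ) / l) ^ k * x ^ k := by rw [htzx, mul_pow]
        _ ≤ (2 * (k:ℝ) / l) ^ k * (Real.exp x) ^ k := by
            exact mul_le_mul_of_nonneg_left (pow_le_pow_left₀ hx0 hxe k) (by positivity)
        _ = (k : ℝ) ^ k * (2 / l) ^ k * Real.exp (l / 2 * (t - z)) := by rw [e1, e2]
    have habs : |t - z| ^ k = (t - z) ^ k := by rw [abs_of_pos hs]
    rw [habs]
    have hphi_t : 0 ≤ stdPhi t := (stdPhi_pos t).le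
    calc (t - z) ^ k * stdPhi t
        ≤ ((k : ℝ) ^ k * (2 / l) ^ k * Real.exp (l / 2 * (t - z))) *
          (stdPhi z * (Real.exp (1/2) * Real.exp (-(l * (t - z))))) := by
          refine mul_le_mul h2 h1 hphi_t ?_
          positivity
      _ = (stdPhi z * Real.exp (1/2) * k ^ k * (2 / l) ^ k) *
          (Real.exp (l / 2 * (t - z)) * Real.exp (-(l * (t - z)))) := by ring
      _ = (stdPhi z * Real.exp (1/2) * k ^ k * (2 / l) ^ k) *
          Real.exp (-(l / 2 * (t - z))) := by
          rw [← Real.exp_add]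
          ring_nf
  refine step.trans ?_
  rw [integral_const_mul, integral_exp_shift (by linarith : (0:ℝ) < l / 2)]
  have h1 : (1 : ℝ) / (l / 2) = 2 / l := by field_simp
  have h2 : (2 / l : ℝ) ^ (k + 1) = (2 / l) ^ k * (2 / l) := pow_succ _ _
  rw [h1, h2]
  exact le_of_eq (by ring)

lemma G_upper {z : ℝ} (hz : 0 ≤ z) :
    1 - stdCDF z ≤ stdPhi z * Real.exp (1/2) * (1 / (1 + z)) := by
  rw [G_eq]
  have hl0 : (0:ℝ) < 1 + z := by linarith
  have step : ∫ t in Set.Ioi z, stdPhi t ≤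
      ∫ t in Set.Ioi z, (stdPhi z * Real.exp (1/2)) * Real.exp (-((1 + z) * (t - z))) := by
    refine setIntegral_mono_on integrable_stdPhi.integrableOn
      ((integrableOn_exp_shift hl0).const_mul _) measurableSet_Ioi ?_
    intro t ht
    have := pointwise_bound hz (le_of_lt ht)
    linarith [this]
  refine step.trans ?_
  rw [integral_const_mul, integral_exp_shift hl0]

lemma G_lower {z : ℝ} (hz : 0 ≤ z) :
    stdPhi z * Real.exp (-(3/2)) * (1 / (1 + z)) ≤ 1 - stdCDF z := by
  rw [G_eq]
  have hl0 : (0:ℝ) < 1 + z := by linarith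
  set d : ℝ := 1 / (1 + z) with hd
  have hd0 : 0 < d := by positivity
  have hd1 : d ≤ 1 := by rw [hd]; rw [div_le_one hl0]; linarith
  have hzd : z * d ≤ 1 := by
    rw [hd]
    rw [mul_one_div, div_le_one hl0]
    linarith
  have step1 : ∫ t in Set.Ioc z (z + d), (stdPhi z * Real.exp (-(3/2))) ≤
      ∫ t in Set.Ioc z (z + d), stdPhi t := by
    refine setIntegral_mono_on ((integrableOn_const_iff).mpr ?_)
      integrable_stdPhi.integrableOn measurableSet_Ioc ?_
    · right; rw [Real.volume_Ioc]; exact ENNReal.ofReal_lt_top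
    · intro t ht
      obtain ⟨ht1, ht2⟩ := ht
      have hkey : stdPhi z * Real.exp (-(3/2)) =
          (Real.sqrt (2 * Real.pi))⁻¹ * Real.exp (-z ^ 2 / 2 + -(3/2)) := by
        unfold stdPhi; rw [Real.exp_add]; ring
      rw [hkey]
      unfold stdPhi
      have hc : (0:ℝ) < (Real.sqrt (2 * Real.pi))⁻¹ := by positivity
      refine mul_le_mul_of_nonneg_left (Real.exp_le_exp.mpr ?_) hc.le
      nlinarith [sq_nonneg d]
  have step2 : ∫ t in Set.Ioc z (z + d), stdPhi t ≤ ∫ t in Set.Ioi z, stdPhi t := by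
    refine setIntegral_mono_set integrable_stdPhi.integrableOn ?_ ?_
    · filter_upwards with t using (stdPhi_pos t).le
    · exact HasSubset.Subset.eventuallyLE Set.Ioc_subset_Ioi_self
  have hconst : ∫ t in Set.Ioc z (z + d), (stdPhi z * Real.exp (-(3/2))) =
      stdPhi z * Real.exp (-(3/2)) * d := by
    rw [setIntegral_const, Real.volume_real_Ioc, smul_eq_mul]
    rw [show z + d - z = d by ring, max_eq_left hd0.le]
    ring
  calc stdPhi z * Real.exp (-(3/2)) * (1 / (1 + z))
      = ∫ t in Set.Ioc z (z + d), (stdPhi z * Real.exp (-(3/2))) := by rw [hconst]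
    _ ≤ ∫ t in Set.Ioc z (z + d), stdPhi t := step1
    _ ≤ ∫ t in Set.Ioi z, stdPhi t := step2

lemma G_pos {z : ℝ} (hz : 0 ≤ z) : 0 < 1 - stdCDF z := by
  have h := G_lower hz
  have hp := stdPhi_pos z
  have : (0:ℝ) < stdPhi z * Real.exp (-(3/2)) * (1 / (1 + z)) := by positivity
  linarith

lemma integrable_id_mul_stdPhi : Integrable (fun t => t * stdPhi t) := by
  refine (integrable_abs_pow_sub_stdPhi 1 0).mono'
    ((continuous_id.mul stdPhi_continuous).aestronglyMeasurable) ?_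
  filter_upwards with t
  rw [Real.norm_eq_abs, abs_mul, abs_of_nonneg (stdPhi_pos t).le]
  simp

lemma truncMean_eq (z : ℝ) :
    truncMean z = (∫ t in Set.Ioi z, t * stdPhi t) / (1 - stdCDF z) := by
  unfold truncMean
  simp_rw [← mul_div_assoc]
  rw [integral_div]

lemma mean_sub {z : ℝ} (hz : 0 ≤ z) :
    truncMean z - z = (∫ t in Set.Ioi z, (t - z) * stdPhi t) / (1 - stdCDF z) := by
  have hG := (G_pos hz).ne'
  have hsub : ∫ t in Set.Ioi z, (t - z) * stdPhi t =
      (∫ t in Set.Ioi z, t * stdPhi t) - z * (1 - stdCDF z) := by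
    have h1 : ∫ t in Set.Ioi z, (t - z) * stdPhi t =
        (∫ t in Set.Ioi z, t * stdPhi t) - ∫ t in Set.Ioi z, z * stdPhi t := by
      rw [← integral_sub integrable_id_mul_stdPhi.integrableOn
        (integrable_stdPhi.integrableOn.const_mul z)]
      congr 1 with t
      ring
    rw [h1, integral_const_mul, ← G_eq]
  rw [hsub, truncMean_eq, sub_div]
  congr 1
  field_simp

lemma mean_ge {z : ℝ} (hz : 0 ≤ z) : z ≤ truncMean z := by
  have h := mean_sub hz
  have hnum : 0 ≤ ∫ t in Set.Ioi z, (t - z) * stdPhi t := by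
    refine setIntegral_nonneg measurableSet_Ioi ?_
    intro t ht
    have : z ≤ t := le_of_lt ht
    have := (stdPhi_pos t).le
    nlinarith
  nlinarith [div_nonneg hnum (G_pos hz).le, h]

lemma mean_ub {z : ℝ} (hz : 0 ≤ z) :
    truncMean z - z ≤ 4 * Real.exp 2 * (1 / (1 + z)) := by
  rw [mean_sub hz]
  have hl0 : (0:ℝ) < 1 + z := by linarith
  have hP := stdPhi_pos z
  have hnum : ∫ t in Set.Ioi z, (t - z) * stdPhi t ≤
      stdPhi z * Real.exp (1/2) * 1 * (2 / (1 + z)) ^ 2 := by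
    have hcongr : ∫ t in Set.Ioi z, (t - z) * stdPhi t =
        ∫ t in Set.Ioi z, |t - z| ^ 1 * stdPhi t := by
      refine setIntegral_congr_fun measurableSet_Ioi ?_
      intro t ht
      have htz : z < t := ht
      show (t - z) * stdPhi t = |t - z| ^ 1 * stdPhi t
      rw [pow_one, abs_of_pos (by linarith : (0:ℝ) < t - z)]
    rw [hcongr]
    simpa using moment_bound 1 hz le_rfl
  have hden := G_lower hz
  have hdenpos : (0:ℝ) < stdPhi z * Real.exp (-(3/2)) * (1 / (1 + z)) := by positivity
  calc (∫ t in Set.Ioi z, (t - z) * stdPhi t) / (1 - stdCDF z)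
      ≤ (stdPhi z * Real.exp (1/2) * 1 * (2 / (1 + z)) ^ 2) /
        (stdPhi z * Real.exp (-(3/2)) * (1 / (1 + z))) := by
        refine div_le_div₀ (by positivity) hnum hdenpos hden
    _ = 4 * (Real.exp (1/2) * Real.exp (3/2)) * (1 / (1 + z)) := by
        rw [Real.exp_neg]
        field_simp
        ring
    _ = 4 * Real.exp 2 * (1 / (1 + z)) := by
        rw [← Real.exp_add]
        norm_num

noncomputable def CN : ℝ := 4 * (432 * Real.exp (1/2) + 64 * Real.exp 6 * Real.exp (1/2))

lemma integrable_sq_sub_stdPhi (c : ℝ) : Integrable (fun t => (t - c) ^ 2 * stdPhi t) := by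
  refine (integrable_abs_pow_sub_stdPhi 2 c).congr ?_
  filter_upwards with t
  rw [sq_abs]

lemma numerator_bound {z : ℝ} (hz : 0 ≤ z) :
    (∫ t in Set.Ioi z, |t - truncMean z| ^ 3 * stdPhi t) ≤
      stdPhi z * CN * (1 / (1 + z)) ^ 4 := by
  set m := truncMean z with hm
  have hmz : z ≤ m := mean_ge hz
  have hl0 : (0:ℝ) < 1 + z := by linarith
  have hP := stdPhi_pos z
  have step1 : (∫ t in Set.Ioi z, |t - m| ^ 3 * stdPhi t) ≤
      ∫ t in Set.Ioi z, (4 * (|t - z| ^ 3 * stdPhi t) + (4 * (m - z) ^ 3) * stdPhi t) := by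
    refine setIntegral_mono_on (integrable_abs_pow_sub_stdPhi 3 m).integrableOn
      (((integrable_abs_pow_sub_stdPhi 3 z).const_mul 4).add
        (integrable_stdPhi.const_mul _)).integrableOn measurableSet_Ioi ?_
    intro t ht
    have htz : z < t := ht
    have h1 : |t - m| ≤ |t - z| + (m - z) := by
      have ht1 := abs_sub_le t z m
      have hzm : |z - m| = m - z := by
        rw [abs_sub_comm]; exact abs_of_nonneg (by linarith)
      linarith
    have h2 : |t - m| ^ 3 ≤ 4 * (|t - z| ^ 3 + (m - z) ^ 3) := by
      have ha : (0:ℝ) ≤ |t - z| := abs_nonneg _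
      have hb : (0:ℝ) ≤ m - z := by linarith
      have habs : (0:ℝ) ≤ |t - m| := abs_nonneg _
      nlinarith [pow_le_pow_left₀ habs h1 3, sq_nonneg (|t - z| - (m - z)),
        mul_nonneg ha hb, sq_nonneg (|t - z| + (m - z))]
    have hphi := (stdPhi_pos t).le
    nlinarith [h2]
  have step2 : ∫ t in Set.Ioi z, (4 * (|t - z| ^ 3 * stdPhi t) + (4 * (m - z) ^ 3) * stdPhi t) =
      4 * (∫ t in Set.Ioi z, |t - z| ^ 3 * stdPhi t) + (4 * (m - z) ^ 3) * (1 - stdCDF z) := by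
    rw [integral_add ((integrable_abs_pow_sub_stdPhi 3 z).integrableOn.const_mul 4)
      (integrable_stdPhi.integrableOn.const_mul _), integral_const_mul, integral_const_mul, ← G_eq]
  have h3 : (∫ t in Set.Ioi z, |t - z| ^ 3 * stdPhi t) ≤
      stdPhi z * Real.exp (1/2) * 27 * (2 / (1 + z)) ^ 4 := by
    have h3' := moment_bound 3 hz (by norm_num)
    rw [show ((3:ℕ):ℝ) ^ (3:ℕ) = 27 from by norm_num] at h3'
    exact h3'
  have h4 : (4 * (m - z) ^ 3) * (1 - stdCDF z) ≤
      4 * (4 * Real.exp 2 * (1 / (1 + z))) ^ 3 * (stdPhi z * Real.exp (1/2) * (1 / (1 + z))) := by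
    have hub := mean_ub hz
    have hG := G_upper hz
    have h5 : (m - z) ^ 3 ≤ (4 * Real.exp 2 * (1 / (1 + z))) ^ 3 :=
      pow_le_pow_left₀ (by linarith) hub 3
    have hGnn := (G_pos hz).le
    have hRnn : (0:ℝ) ≤ (4 * Real.exp 2 * (1 / (1 + z))) ^ 3 := by positivity
    nlinarith [mul_le_mul h5 hG hGnn hRnn]
  calc (∫ t in Set.Ioi z, |t - m| ^ 3 * stdPhi t)
      ≤ 4 * (∫ t in Set.Ioi z, |t - z| ^ 3 * stdPhi t) + (4 * (m - z) ^ 3) * (1 - stdCDF z) := by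
        rw [← step2]; exact step1
    _ ≤ 4 * (stdPhi z * Real.exp (1/2) * 27 * (2 / (1 + z)) ^ 4) +
        4 * (4 * Real.exp 2 * (1 / (1 + z))) ^ 3 * (stdPhi z * Real.exp (1/2) * (1 / (1 + z))) := by
        linarith
    _ = stdPhi z * CN * (1 / (1 + z)) ^ 4 := by
        unfold CN
        rw [show Real.exp 6 = Real.exp 2 ^ 3 from by rw [← Real.exp_nat_mul]; norm_num]
        field_simp
        ring

lemma truncVar_eq (z : ℝ) :
    truncVar z = (∫ t in Set.Ioi z, (t - truncMean z) ^ 2 * stdPhi t) / (1 - stdCDF z) := by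
  unfold truncVar
  simp_rw [← mul_div_assoc]
  rw [integral_div]

lemma var_lower {z : ℝ} (hz : 0 ≤ z) :
    Real.exp (-3) / 27 * (1 / (1 + z)) ^ 2 ≤ truncVar z := by
  have hl0 : (0:ℝ) < 1 + z := by linarith
  have hP := stdPhi_pos z
  have hG := G_pos hz
  set m := truncMean z with hm
  set G : ℝ := 1 - stdCDF z with hGdef
  set P : ℝ := stdPhi z with hPdef
  set e : ℝ := G / (3 * P) with he
  have he0 : 0 < e := by positivity
  set I : Set ℝ := Set.Ioo (m - e) (m + e) with hI
  set S : Set ℝ := Set.Ioi z \ (Set.Ioi z ∩ I) with hS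
  have hmeasI : MeasurableSet (Set.Ioi z ∩ I) := measurableSet_Ioi.inter measurableSet_Ioo
  have hIsub : Set.Ioi z ∩ I ⊆ Set.Ioi z := Set.inter_subset_left
  have hSsub : S ⊆ Set.Ioi z := Set.diff_subset
  have hintOn : IntegrableOn (fun t => (t - m) ^ 2 * stdPhi t) (Set.Ioi z) :=
    (integrable_sq_sub_stdPhi m).integrableOn
  -- step: ∫_{Ioi z ∩ I} φ ≤ 2 e P
  have h4 : ∫ t in Set.Ioi z ∩ I, stdPhi t ≤ 2 * e * P := by
    have hle : ∫ t in Set.Ioi z ∩ I, stdPhi t ≤ ∫ t in Set.Ioi z ∩ I, P := by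
      refine setIntegral_mono_on (integrable_stdPhi.integrableOn) ?_ hmeasI ?_
      · refine (integrableOn_const_iff).mpr (Or.inr ?_)
        refine (measure_mono Set.inter_subset_right).trans_lt ?_
        rw [hI, Real.volume_Ioo]
        exact ENNReal.ofReal_lt_top
      · intro t ht
        exact stdPhi_anti hz (le_of_lt ht.1)
    refine hle.trans ?_
    rw [setIntegral_const, smul_eq_mul]
    have hvol : (volume (Set.Ioi z ∩ I)).toReal ≤ 2 * e := by
      have h1 : volume (Set.Ioi z ∩ I) ≤ volume I := measure_mono Set.inter_subset_right
      have h2 : volume I = ENNReal.ofReal (2 * e) := by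
        rw [hI, Real.volume_Ioo]
        congr 1
        ring
      have h3 : volume (Set.Ioi z ∩ I) ≠ ⊤ := by
        rw [h2] at h1
        exact (h1.trans_lt ENNReal.ofReal_lt_top).ne
      calc (volume (Set.Ioi z ∩ I)).toReal ≤ (ENNReal.ofReal (2 * e)).toReal := by
            rw [← h2]
            exact ENNReal.toReal_mono (by rw [h2]; exact ENNReal.ofReal_ne_top) h1
        _ = 2 * e := ENNReal.toReal_ofReal (by positivity)
    nlinarith [show volume.real (Set.Ioi z ∩ I) = (volume (Set.Ioi z ∩ I)).toReal from rfl]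
  -- step: ∫_S φ ≥ G/3
  have h5 : G / 3 ≤ ∫ t in S, stdPhi t := by
    have hdiff : ∫ t in S, stdPhi t =
        (∫ t in Set.Ioi z, stdPhi t) - ∫ t in Set.Ioi z ∩ I, stdPhi t := by
      rw [hS]
      exact integral_diff hmeasI integrable_stdPhi.integrableOn hIsub
    rw [hdiff, ← G_eq, ← hGdef]
    have : 2 * e * P = 2 / 3 * G := by
      rw [he]
      field_simp
    linarith [h4, this]
  -- step: ∫_S (t-m)^2 φ ≥ e^2 * ∫_S φ
  have h6 : e ^ 2 * ∫ t in S, stdPhi t ≤ ∫ t in S, (t - m) ^ 2 * stdPhi t := by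
    rw [← integral_const_mul]
    refine setIntegral_mono_on
      (IntegrableOn.mono_set (integrable_stdPhi.integrableOn.const_mul _) hSsub)
      (IntegrableOn.mono_set hintOn hSsub) (measurableSet_Ioi.diff hmeasI) ?_
    intro t ht
    obtain ⟨ht1, ht2⟩ := ht
    have hnotI : t ∉ I := fun h => ht2 ⟨ht1, h⟩
    rw [hI, Set.mem_Ioo, not_and_or] at hnotI
    have hsq : e ^ 2 ≤ (t - m) ^ 2 := by
      rcases hnotI with h | h
      · push_neg at h
        nlinarith
      · push_neg at h
        nlinarith
    nlinarith [stdPhi_pos t, hsq]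
  -- combine
  have h7 : e ^ 2 * (G / 3) ≤ ∫ t in Set.Ioi z, (t - m) ^ 2 * stdPhi t := by
    have hmono : ∫ t in S, (t - m) ^ 2 * stdPhi t ≤
        ∫ t in Set.Ioi z, (t - m) ^ 2 * stdPhi t := by
      refine setIntegral_mono_set hintOn ?_ (HasSubset.Subset.eventuallyLE hSsub)
      filter_upwards with t
      have := (stdPhi_pos t).le
      positivity
    have := mul_le_mul_of_nonneg_left h5 (sq_nonneg e)
    linarith
  have h8 : e ^ 2 / 3 ≤ truncVar z := by
    rw [truncVar_eq, ← hm, ← hGdef]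
    rw [le_div_iff₀ hG]
    calc e ^ 2 / 3 * G = e ^ 2 * (G / 3) := by ring
      _ ≤ ∫ t in Set.Ioi z, (t - m) ^ 2 * stdPhi t := h7
  refine le_trans ?_ h8
  -- e = G/(3P) ≥ exp(-3/2)/(3(1+z))
  have hGl := G_lower hz
  have he_low : Real.exp (-(3/2)) / 3 * (1 / (1 + z)) ≤ e := by
    rw [he, le_div_iff₀ (by positivity)]
    calc Real.exp (-(3/2)) / 3 * (1 / (1 + z)) * (3 * P)
        = P * Real.exp (-(3/2)) * (1 / (1 + z)) := by ring
      _ ≤ G := hGl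
  have hsq := mul_self_le_mul_self (by positivity : (0:ℝ) ≤ Real.exp (-(3/2)) / 3 * (1 / (1 + z))) he_low
  have hexp : Real.exp (-(3/2)) * Real.exp (-(3/2)) = Real.exp (-3) := by
    rw [← Real.exp_add]; norm_num
  nlinarith [hsq, hexp]

/-- The standardized absolute third central moment of the standard normal truncated
below at `z` is bounded uniformly over `z ≥ 0`, i.e. its supremum `C₁` is finite. -/
theorem stmt_18 :
    ∃ C : ℝ, ∀ z : ℝ, 0 ≤ z →
      (∫ t in Set.Ioi z, |t - truncMean z| ^ 3 * (stdPhi t / (1 - stdCDF z))) /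
          (truncVar z) ^ ((3 : ℝ) / 2) ≤ C := by
  use CN * Real.exp (3/2) / ((Real.exp (-3) / 27) ^ ((3:ℝ)/2))
  intro z hz
  have hl0 : (0:ℝ) < 1 + z := by linarith
  have hP := stdPhi_pos z
  have hG := G_pos hz
  have hCN : (0:ℝ) < CN := by unfold CN; positivity
  set u : ℝ := 1 / (1 + z) with hu
  have hu0 : 0 < u := by positivity
  -- numerator rewrite
  have hnum_eq : (∫ t in Set.Ioi z, |t - truncMean z| ^ 3 * (stdPhi t / (1 - stdCDF z))) =
      (∫ t in Set.Ioi z, |t - truncMean z| ^ 3 * stdPhi t) / (1 - stdCDF z) := by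
    simp_rw [← mul_div_assoc]
    rw [integral_div]
  -- numerator over G bound
  have hnum : (∫ t in Set.Ioi z, |t - truncMean z| ^ 3 * stdPhi t) / (1 - stdCDF z) ≤
      CN * Real.exp (3/2) * u ^ 3 := by
    have hd : (0:ℝ) < stdPhi z * Real.exp (-(3/2)) * u := by positivity
    calc (∫ t in Set.Ioi z, |t - truncMean z| ^ 3 * stdPhi t) / (1 - stdCDF z)
        ≤ (stdPhi z * CN * u ^ 4) / (stdPhi z * Real.exp (-(3/2)) * u) := by
          exact div_le_div₀ (by positivity) (numerator_bound hz) hd (G_lower hz)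
      _ = CN * Real.exp (3/2) * u ^ 3 := by
          rw [Real.exp_neg]
          field_simp
  -- variance rpow bound
  set w : ℝ := (Real.exp (-3) / 27) ^ ((3:ℝ)/2) with hw
  have hw0 : 0 < w := by rw [hw]; positivity
  have hvar : w * u ^ 3 ≤ (truncVar z) ^ ((3:ℝ)/2) := by
    have h1 := var_lower hz
    have h2 : (Real.exp (-3) / 27 * u ^ 2) ^ ((3:ℝ)/2) ≤ (truncVar z) ^ ((3:ℝ)/2) :=
      Real.rpow_le_rpow (by positivity) h1 (by norm_num)
    refine le_trans (le_of_eq ?_) h2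
    rw [Real.mul_rpow (by positivity) (by positivity), ← hw]
    congr 1
    rw [← Real.rpow_natCast u 2, ← Real.rpow_mul hu0.le]
    rw [show ((2:ℕ):ℝ) * ((3:ℝ)/2) = ((3:ℕ):ℝ) by norm_num]
    rw [Real.rpow_natCast]
  have hvar0 : (0:ℝ) < w * u ^ 3 := by positivity
  calc (∫ t in Set.Ioi z, |t - truncMean z| ^ 3 * (stdPhi t / (1 - stdCDF z))) /
        (truncVar z) ^ ((3 : ℝ) / 2)
      ≤ (CN * Real.exp (3/2) * u ^ 3) / (w * u ^ 3) := by
        rw [hnum_eq]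
        exact div_le_div₀ (by positivity) hnum hvar0 hvar
    _ = CN * Real.exp (3/2) / w := by
        field_simp
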